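/- (Lemma, infinite sequence bound.) Let ε > 0 and let (x_i)_{i ≥ 0} be a sequence of nonnegative real numbers such that the series Σ_{i=0}^{∞} x_i converges with sum C < ∞ and x_{i+1} ≤ x_i + ε for all i ≥ 0. Then for every i ≥ 0: x_i ≤ C/(i+1) + √(2Cε) + ε. -/

import Mathlib

/-- Lemma: infinite sequence bound. -/
theorem infinite_sequence_bound (ε : ℝ) (hε : 0 < ε) (x : ℕ → ℝ) (C : ℝ)
    (hnn : ∀ i, 0 ≤ x i) (hsum : HasSum x C) (hstep : ∀ i, x (i + 1) ≤ x i + ε) :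
    ∀ i, x i ≤ C / ((i : ℝ) + 1) + Real.sqrt (2 * C * ε) + ε := by
  have hC : 0 ≤ C := by
    simpa using sum_le_hasSum (∅ : Finset ℕ) (fun j _ => hnn j) hsum
  -- backward estimate: x (j + m) ≤ x j + m ε
  have back : ∀ m j, x (j + m) ≤ x j + (m : ℝ) * ε := by
    intro m
    induction m with
    | zero => intro j; simp
    | succ n ih =>
        intro j
        have h1 := hstep (j + n)
        have h2 := ih j
        push_cast
        calc x (j + (n + 1)) = x ((j + n) + 1) := by ring_nf
          _ ≤ x (j + n) + ε := h1
          _ ≤ x j + (n : ℝ) * ε + ε := by linarith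
          _ = x j + ((n : ℝ) + 1) * ε := by ring
  have hsumle : ∀ s : Finset ℕ, ∑ j ∈ s, x j ≤ C :=
    fun s => sum_le_hasSum s (fun j _ => hnn j) hsum
  -- key inequality
  have hkey : ∀ i k : ℕ, 1 ≤ k → k ≤ i + 1 →
      (k : ℝ) * x i ≤ C + ε * ((k : ℝ) * ((k : ℝ) - 1)) / 2 := by
    intro i k hk1 hki
    have hinj : ∀ a ∈ Finset.range k, ∀ b ∈ Finset.range k,
        i - a = i - b → a = b := by
      intro a ha b hb hab
      simp only [Finset.mem_range] at ha hb
      omega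
    have hsub : ∑ t ∈ Finset.range k, x (i - t) ≤ C := by
      rw [← Finset.sum_image hinj]
      exact hsumle _
    have hlow : ∀ t ∈ Finset.range k, x i - (t : ℝ) * ε ≤ x (i - t) := by
      intro t ht
      simp only [Finset.mem_range] at ht
      have heq : (i - t) + t = i := by omega
      have := back t (i - t)
      rw [heq] at this
      linarith
    have hsum2 : ∑ t ∈ Finset.range k, (x i - (t : ℝ) * ε)
        ≤ ∑ t ∈ Finset.range k, x (i - t) := Finset.sum_le_sum hlow
    have hgauss : ∑ t ∈ Finset.range k, (t : ℝ) = (k : ℝ) * ((k : ℝ) - 1) / 2 := by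
      have h2 := Finset.sum_range_id_mul_two k
      have h3 := congrArg (Nat.cast (R := ℝ)) h2
      push_cast [Nat.cast_sub hk1] at h3
      push_cast
      linarith
    have hlhs : ∑ t ∈ Finset.range k, (x i - (t : ℝ) * ε)
        = (k : ℝ) * x i - ε * ((k : ℝ) * ((k : ℝ) - 1) / 2) := by
      rw [Finset.sum_sub_distrib]
      simp only [Finset.sum_const, Finset.card_range, nsmul_eq_mul]
      rw [← Finset.sum_mul, hgauss]
      ring
    have : (k : ℝ) * x i - ε * ((k : ℝ) * ((k : ℝ) - 1) / 2) ≤ C := by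
      rw [← hlhs]; exact le_trans hsum2 hsub
    linarith
  intro i
  set Q := Real.sqrt (2 * C * ε) with hQdef
  have hQ0 : 0 ≤ Q := Real.sqrt_nonneg _
  have hQ2 : Q ^ 2 = 2 * C * ε := Real.sq_sqrt (by positivity)
  have hQε : 0 ≤ Q / ε := div_nonneg hQ0 hε.le
  by_cases h : i + 1 ≤ ⌊Q / ε⌋₊ + 1
  · -- small i case: take k = i + 1
    have hik : (i : ℝ) ≤ Q / ε := by
      have hi : i ≤ ⌊Q / ε⌋₊ := by omega
      calc (i : ℝ) ≤ (⌊Q / ε⌋₊ : ℝ) := by exact_mod_cast hi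
        _ ≤ Q / ε := Nat.floor_le hQε
    have hεi : ε * (i : ℝ) ≤ Q := by
      rw [le_div_iff₀ hε] at hik
      linarith
    have hkeyi := hkey i (i + 1) (by omega) le_rfl
    push_cast at hkeyi
    have hn : (0 : ℝ) < (i : ℝ) + 1 := by positivity
    rw [← mul_le_mul_iff_right₀ hn]
    have hcn : ((i : ℝ) + 1) * (C / ((i : ℝ) + 1)) = C := by
      field_simp
    nlinarith [hkeyi, hεi, hQ0, hε.le, hn]
  · -- large i case: take k = ⌊Q/ε⌋₊ + 1
    set f := ⌊Q / ε⌋₊ with hfdef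
    have hki : f + 1 ≤ i + 1 := by omega
    have hkeyf := hkey i (f + 1) (by omega) hki
    have hfle : (f : ℝ) ≤ Q / ε := Nat.floor_le hQε
    have hflt : Q / ε < (f : ℝ) + 1 := Nat.lt_floor_add_one _
    have hεf : ε * (f : ℝ) ≤ Q := by
      rw [le_div_iff₀ hε] at hfle
      linarith
    have hQεf : Q < ε * ((f : ℝ) + 1) := by
      rw [div_lt_iff₀ hε] at hflt
      linarith
    push_cast at hkeyf
    have hxQ : x i ≤ Q := by
      have hfp : (0 : ℝ) < (f : ℝ) + 1 := by positivity
      nlinarith [hkeyf, hεf, hQεf, hQ2, hQ0, hε.le, hfp, mul_nonneg hQ0 hfp.le]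
    have hcn : 0 ≤ C / ((i : ℝ) + 1) := by positivity
    linarith
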